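/- Let K be a field, let R be a K-algebra containing elements p, t, t* with t*t = p, tp = pt = t, pt* = t*p = t*, p² = p, and p ≠ 0, tt* = p, and such that the subalgebra generated by p, t, t* sits in degrees matching a Z-grading with deg t = 1, deg t* = −1, deg p = 0 and the degree-n component of pRp is spanned by tⁿ (for n ≥ 0) and (t*)^{−n} (for n < 0). Then pRp is isomorphic as a K-algebra to the Laurent polynomial ring K[x, x⁻¹], via p ↦ 1, t ↦ x, t* ↦ x⁻¹. -/

import Mathlib

/-- Let `R` be a `ℤ`-graded `K`-algebra containing elements `p, t, ts` (with
`ts` playing the role of `t*`) of degrees `0, 1, -1` respectively, satisfying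
`t* t = t t* = p`, `tp = pt = t`, `p t* = t* p = t*`, `p² = p ≠ 0`, and such
that the degree-`n` component of the corner `pRp` is spanned by `tⁿ` (for
`n ≥ 0`) and `(t*)^{-n}` (for `n < 0`). Then `pRp` is isomorphic as a
`K`-algebra to the Laurent polynomial ring `K[x,x⁻¹]`, via an isomorphism
matching `1 ↔ p`, `x ↔ t`, `x⁻¹ ↔ t*`. -/
theorem stmt16 {K : Type*} [Field K] {R : Type*} [Ring R] [Algebra K R]
    (𝒜 : ℤ → Submodule K R) [GradedAlgebra 𝒜]
    (p t ts : R)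
    (hp0 : p ∈ 𝒜 0) (ht1 : t ∈ 𝒜 1) (hts1 : ts ∈ 𝒜 (-1))
    (hidem : p * p = p) (hpne : p ≠ 0)
    (htst : ts * t = p) (htts : t * ts = p)
    (htp : t * p = t) (hpt : p * t = t)
    (hpts : p * ts = ts) (htsp : ts * p = ts)
    (hspan : ∀ (n : ℤ) (x : R), x ∈ 𝒜 n → p * x * p = x →
      ∃ c : K, x = c • (if 0 ≤ n then t ^ n.toNat else ts ^ (-n).toNat)) :
    ∃ φ : LaurentPolynomial K →ₗ[K] R,
      (∀ a b : LaurentPolynomial K, φ (a * b) = φ a * φ b) ∧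
      Function.Injective φ ∧
      Set.range φ = {x : R | p * x * p = x} ∧
      φ 1 = p ∧ φ (LaurentPolynomial.T 1) = t ∧ φ (LaurentPolynomial.T (-1)) = ts := by
  have hnt : Nontrivial R := nontrivial_of_ne p 0 hpne
  -- Step 1: p = 1
  have hp1 : p = 1 := by
    obtain ⟨c, hc⟩ := hspan 0 p hp0 (by rw [hidem, hidem])
    simp only [le_refl, if_pos, Int.toNat_zero, pow_zero] at hc
    have hcc : (c * c - c) • (1 : R) = 0 := by
      have : (c * c) • (1 : R) = c • 1 := by
        calc (c * c) • (1 : R) = (c • 1) * (c • 1) := by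
              rw [smul_mul_smul_comm, one_mul]
            _ = c • 1 := by rw [← hc, hidem, hc]
      rw [sub_smul, this, sub_self]
    have hc0 : c ≠ 0 := by rintro rfl; rw [hc, zero_smul] at hpne; exact hpne rfl
    have hccc : c * c = c := by
      by_contra h
      have h' : c * c - c ≠ 0 := sub_ne_zero.mpr h
      have : (1 : R) = 0 := by
        have := congrArg (fun x => (c * c - c)⁻¹ • x) hcc
        simpa [smul_smul, inv_mul_cancel₀ h'] using this
      exact one_ne_zero this
    have : c = 1 := mul_left_cancel₀ hc0 (by rw [hccc, mul_one])
    rw [hc, this, one_smul]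
  have htts1 : t * ts = 1 := by rw [htts, hp1]
  have htst1 : ts * t = 1 := by rw [htst, hp1]
  set tu : Rˣ := ⟨t, ts, htts1, htst1⟩ with htu
  have hinv : ((tu⁻¹ : Rˣ) : R) = ts := rfl
  set v : ℤ → R := fun n => ((tu ^ n : Rˣ) : R) with hvdef
  have hvnat : ∀ k : ℕ, v (k : ℤ) = t ^ k := by
    intro k
    show ((tu ^ (k : ℤ) : Rˣ) : R) = t ^ k
    rw [zpow_natCast, Units.val_pow_eq_pow_val]
  have hvneg : ∀ k : ℕ, v (-(k : ℤ)) = ts ^ k := by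
    intro k
    show ((tu ^ (-(k : ℤ)) : Rˣ) : R) = ts ^ k
    rw [zpow_neg, zpow_natCast, ← inv_pow, Units.val_pow_eq_pow_val, hinv]
  have hv : ∀ n : ℤ, v n = (if 0 ≤ n then t ^ n.toNat else ts ^ (-n).toNat) := by
    intro n
    rcases le_or_gt 0 n with h | h
    · rw [if_pos h]
      obtain ⟨k, rfl⟩ : ∃ k : ℕ, n = (k : ℤ) := ⟨n.toNat, by omega⟩
      rw [Int.toNat_natCast]; exact hvnat k
    · rw [if_neg h.not_ge]
      obtain ⟨k, rfl⟩ : ∃ k : ℕ, n = -(k : ℤ) := ⟨(-n).toNat, by omega⟩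
      rw [neg_neg, Int.toNat_natCast]; exact hvneg k
  have hv_mem : ∀ n : ℤ, v n ∈ 𝒜 n := by
    intro n
    rcases le_or_gt 0 n with h | h
    · obtain ⟨k, rfl⟩ : ∃ k : ℕ, n = (k : ℤ) := ⟨n.toNat, by omega⟩
      rw [hvnat]
      have := SetLike.pow_mem_graded k ht1
      simpa using this
    · obtain ⟨k, rfl⟩ : ∃ k : ℕ, n = -(k : ℤ) := ⟨(-n).toNat, by omega⟩
      rw [hvneg]
      have := SetLike.pow_mem_graded k hts1
      simpa using this
  have hv_ne : ∀ n : ℤ, v n ≠ 0 := fun n => (tu ^ n).ne_zero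
  -- the algebra map via AddMonoidAlgebra.lift
  set F : Multiplicative ℤ →* R := (Units.coeHom R).comp (zpowersHom Rˣ tu) with hF
  set Φ : AddMonoidAlgebra K ℤ →ₐ[K] R := AddMonoidAlgebra.lift K R ℤ F with hΦ
  set φ : LaurentPolynomial K →ₗ[K] R := (Finsupp.linearCombination K v).comp (AddMonoidAlgebra.coeffLinearEquiv K).toLinearMap with hφdef
  have hφ_single : ∀ (n : ℤ) (c : K), φ (AddMonoidAlgebra.single n c) = c • v n := by
    intro n c
    show Finsupp.linearCombination K v (Finsupp.single n c) = c • v n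
    rw [Finsupp.linearCombination_single]
  have hφΦ : φ = Φ.toLinearMap := by
    apply AddMonoidAlgebra.lhom_ext'
    intro n
    apply LinearMap.ext
    intro c
    refine (hφ_single n c).trans ?_
    show c • v n = Φ (AddMonoidAlgebra.single n c)
    rw [hΦ, AddMonoidAlgebra.lift_single]
    congr 1
  refine ⟨φ, ?_, ?_, ?_, ?_, ?_, ?_⟩
  · -- multiplicative
    intro a b
    rw [hφΦ]
    exact map_mul Φ a b
  · -- injective
    have hind : LinearIndependent K v :=
      iSupIndep.linearIndependent 𝒜
        (DirectSum.IsInternal.submodule_iSupIndep (DirectSum.Decomposition.isInternal 𝒜)) hv_mem hv_ne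
    exact (show Function.Injective (Finsupp.linearCombination K v) from hind).comp (AddMonoidAlgebra.coeffLinearEquiv K).injective
  · -- range
    ext x
    simp only [Set.mem_range, Set.mem_setOf_eq]
    constructor
    · rintro ⟨g, rfl⟩; simp [hp1]
    · intro _
      classical
      have hx : ∑ i ∈ (DirectSum.decompose 𝒜 x).support, ((DirectSum.decompose 𝒜 x) i : R) = x :=
        DirectSum.sum_support_decompose 𝒜 x
      have hmem : x ∈ LinearMap.range φ := by
        rw [← hx]
        apply Submodule.sum_mem
        intro i _
        obtain ⟨c, hc⟩ := hspan i ((DirectSum.decompose 𝒜 x) i)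
          (SetLike.coe_mem _) (by simp [hp1])
        refine ⟨AddMonoidAlgebra.single i c, ?_⟩
        rw [hφ_single, hv, ← hc]
      obtain ⟨g, hg⟩ := hmem
      exact ⟨g, hg⟩
  · -- φ 1 = p
    have h1 : (1 : LaurentPolynomial K) = AddMonoidAlgebra.single 0 1 := rfl
    rw [h1, hφ_single, one_smul, hp1]
    show ((tu ^ (0 : ℤ) : Rˣ) : R) = 1
    rw [zpow_zero, Units.val_one]
  · -- φ (T 1) = t
    have h1 : (LaurentPolynomial.T 1 : LaurentPolynomial K) = AddMonoidAlgebra.single 1 1 := rfl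
    rw [h1, hφ_single, one_smul]
    show ((tu ^ (1 : ℤ) : Rˣ) : R) = t
    rw [zpow_one]
  · -- φ (T (-1)) = ts
    have h1 : (LaurentPolynomial.T (-1) : LaurentPolynomial K) = AddMonoidAlgebra.single (-1) 1 := rfl
    rw [h1, hφ_single, one_smul]
    show ((tu ^ (-1 : ℤ) : Rˣ) : R) = ts
    rw [zpow_neg_one, hinv]
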